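/- Suppose (x⋆, y⋆, a⋆, b⋆) ∈ 𝒳 × 𝒴 × 𝒳 × 𝒴 is a saddle point of the primal-dual objective F_pd, i.e. F_pd(x⋆, y, a, b⋆) ≤ F_pd(x⋆, y⋆, a⋆, b⋆) ≤ F_pd(x, y⋆, a⋆, b) holds in the extended reals for all x, a ∈ 𝒳 and y, b ∈ 𝒴. Then (x⋆, y⋆) is a saddle point of F: F(x⋆, y) ≤ F(x⋆, y⋆) ≤ F(x, y⋆) for all x ∈ 𝒳, y ∈ 𝒴. -/

import Mathlib

open scoped RealInnerProductSpace

/-- Convex conjugate `f*(a) = sup_x (⟪a, x⟫ − f(x))`, valued in the extended reals. -/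
noncomputable def conj {X : Type*} [NormedAddCommGroup X] [InnerProductSpace ℝ X]
    (f : X → ℝ) (a : X) : EReal :=
  ⨆ x : X, ((⟪a, x⟫ - f x : ℝ) : EReal)

/-- The primal-dual objective
`F_pd(x, y, a, b) = ⟪a, x⟫ − ⟪b, y⟫ + (μˣ/2)‖x‖² − (μʸ/2)‖y‖² + h(x, y) − f*(a) + g*(b)`,
valued in the extended reals. -/
noncomputable def Fpd {X Y : Type*} [NormedAddCommGroup X] [InnerProductSpace ℝ X]
    [NormedAddCommGroup Y] [InnerProductSpace ℝ Y]
    (f : X → ℝ) (g : Y → ℝ) (h : X × Y → ℝ) (μx μy : ℝ)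
    (x : X) (y : Y) (a : X) (b : Y) : EReal :=
  ((⟪a, x⟫ - ⟪b, y⟫ + μx / 2 * ‖x‖ ^ 2 - μy / 2 * ‖y‖ ^ 2 + h (x, y) : ℝ) : EReal)
    - conj f a + conj g b

lemma grad_ineq {X : Type*} [NormedAddCommGroup X] [InnerProductSpace ℝ X]
    [FiniteDimensional ℝ X] (f : X → ℝ) (hconv : ConvexOn ℝ Set.univ f)
    (hd : Differentiable ℝ f) (x v : X) :
    f x + ⟪gradient f x, v - x⟫ ≤ f v := by
  set φ : ℝ → X := fun t => t • (v - x) + x with hφ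
  have hφconv : ConvexOn ℝ Set.univ (f ∘ φ) := by
    have h1 : ConvexOn ℝ ((AffineMap.lineMap x v : ℝ →ᵃ[ℝ] X) ⁻¹' Set.univ)
        (f ∘ (AffineMap.lineMap x v : ℝ →ᵃ[ℝ] X)) := hconv.comp_affineMap _
    have h2 : φ = fun t => (AffineMap.lineMap x v : ℝ →ᵃ[ℝ] X) t := by
      funext t; simp [hφ, AffineMap.lineMap_apply]
    simpa [h2] using h1
  have hφ0 : φ 0 = x := by simp [hφ]
  have hφ1 : φ 1 = v := by simp [hφ]
  have hder : HasDerivAt φ (v - x) 0 := by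
    simpa [hφ] using ((hasDerivAt_id (0:ℝ)).smul_const (v - x)).add_const x
  have hcomp : HasDerivAt (f ∘ φ) (fderiv ℝ f x (v - x)) 0 := by
    have hx : HasFDerivAt f (fderiv ℝ f x) (φ 0) := hφ0 ▸ (hd x).hasFDerivAt
    exact hx.comp_hasDerivAt 0 hder
  have hslope := hφconv.le_slope_of_hasDerivAt (Set.mem_univ 0) (Set.mem_univ 1) zero_lt_one hcomp
  rw [slope_def_field] at hslope
  simp only [Function.comp, hφ0, hφ1] at hslope
  have hgrad : ⟪gradient f x, v - x⟫ = fderiv ℝ f x (v - x) := by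
    rw [← InnerProductSpace.toDual_apply_apply]
    simp [gradient]
  rw [hgrad]
  have : (f v - f x) / (1 - 0) = f v - f x := by norm_num
  linarith [hslope, this ▸ hslope]

lemma fy_lem {X : Type*} [NormedAddCommGroup X] [InnerProductSpace ℝ X]
    (f : X → ℝ) (a x : X) : ((⟪a, x⟫ - f x : ℝ) : EReal) ≤ conj f a :=
  le_iSup (fun x => ((⟪a, x⟫ - f x : ℝ) : EReal)) x

lemma conj_ne_bot {X : Type*} [NormedAddCommGroup X] [InnerProductSpace ℝ X]
    (f : X → ℝ) (a : X) : conj f a ≠ ⊥ := fun hb => by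
  have := fy_lem f a 0
  rw [hb, le_bot_iff] at this
  exact EReal.coe_ne_bot _ this

lemma conj_grad {X : Type*} [NormedAddCommGroup X] [InnerProductSpace ℝ X]
    [FiniteDimensional ℝ X] (f : X → ℝ) (hconv : ConvexOn ℝ Set.univ f)
    (hd : Differentiable ℝ f) (x : X) :
    conj f (gradient f x) = ((⟪gradient f x, x⟫ - f x : ℝ) : EReal) := by
  refine le_antisymm (iSup_le fun v => ?_) (fy_lem f (gradient f x) x)
  have h1 := grad_ineq f hconv hd x v
  rw [inner_sub_right] at h1
  exact EReal.coe_le_coe_iff.mpr (by linarith)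

lemma Fpd_real {X Y : Type*} [NormedAddCommGroup X] [InnerProductSpace ℝ X]
    [NormedAddCommGroup Y] [InnerProductSpace ℝ Y]
    (f : X → ℝ) (g : Y → ℝ) (h : X × Y → ℝ) (μx μy : ℝ)
    (x : X) (y : Y) (a : X) (b : Y) (rA rB : ℝ)
    (hA : conj f a = (rA : EReal)) (hB : conj g b = (rB : EReal)) :
    Fpd f g h μx μy x y a b =
      ((⟪a, x⟫ - ⟪b, y⟫ + μx / 2 * ‖x‖ ^ 2 - μy / 2 * ‖y‖ ^ 2 + h (x, y) - rA + rB : ℝ)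
        : EReal) := by
  rw [Fpd, hA, hB, ← EReal.coe_sub, ← EReal.coe_add]


/-- If `(x⋆, y⋆, a⋆, b⋆)` is a saddle point of the primal-dual objective `F_pd`, then
`(x⋆, y⋆)` is a saddle point of
`F(x, y) = f(x) + h(x, y) − g(y) + (μˣ/2)‖x‖² − (μʸ/2)‖y‖²`. -/
theorem stmt_3 {X Y : Type*} [NormedAddCommGroup X] [InnerProductSpace ℝ X]
    [FiniteDimensional ℝ X] [NormedAddCommGroup Y] [InnerProductSpace ℝ Y]
    [FiniteDimensional ℝ Y]
    (f : X → ℝ) (g : Y → ℝ) (h : X × Y → ℝ) (μx μy Lx Ly : ℝ)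
    (hμx : 0 < μx) (hμy : 0 < μy)
    (hfconv : ConvexOn ℝ Set.univ f) (hgconv : ConvexOn ℝ Set.univ g)
    (hfd : Differentiable ℝ f) (hgd : Differentiable ℝ g) (hhd : Differentiable ℝ h)
    (hfsmooth : ∀ a b : X, ‖gradient f a - gradient f b‖ ≤ Lx * ‖a - b‖)
    (hgsmooth : ∀ a b : Y, ‖gradient g a - gradient g b‖ ≤ Ly * ‖a - b‖)
    (hcc₁ : ∀ y : Y, ConvexOn ℝ Set.univ (fun x => h (x, y)))
    (hcc₂ : ∀ x : X, ConcaveOn ℝ Set.univ (fun y => h (x, y)))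
    (xs : X) (ys : Y) (as' : X) (bs : Y)
    (hsaddle₁ : ∀ (y : Y) (a : X),
      Fpd f g h μx μy xs y a bs ≤ Fpd f g h μx μy xs ys as' bs)
    (hsaddle₂ : ∀ (x : X) (b : Y),
      Fpd f g h μx μy xs ys as' bs ≤ Fpd f g h μx μy x ys as' b) :
    (∀ y : Y,
        f xs + h (xs, y) - g y + μx / 2 * ‖xs‖ ^ 2 - μy / 2 * ‖y‖ ^ 2 ≤
          f xs + h (xs, ys) - g ys + μx / 2 * ‖xs‖ ^ 2 - μy / 2 * ‖ys‖ ^ 2) ∧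
      (∀ x : X,
        f xs + h (xs, ys) - g ys + μx / 2 * ‖xs‖ ^ 2 - μy / 2 * ‖ys‖ ^ 2 ≤
          f x + h (x, ys) - g ys + μx / 2 * ‖x‖ ^ 2 - μy / 2 * ‖ys‖ ^ 2) := by
  set af := gradient f xs with haf
  set bg := gradient g ys with hbg
  have hAf : conj f af = ((⟪af, xs⟫ - f xs : ℝ) : EReal) := conj_grad f hfconv hfd xs
  have hBg : conj g bg = ((⟪bg, ys⟫ - g ys : ℝ) : EReal) := conj_grad g hgconv hgd ys
  -- conj f as' is not ⊤
  have hAtop : conj f as' ≠ ⊤ := by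
    intro htop
    have h1 := hsaddle₁ ys af
    rw [Fpd, Fpd, htop, hAf, EReal.sub_top, EReal.bot_add, le_bot_iff,
      ← EReal.coe_sub, EReal.add_eq_bot_iff] at h1
    rcases h1 with h1 | h1
    · exact EReal.coe_ne_bot _ h1
    · exact conj_ne_bot g bs h1
  have hAbot : conj f as' ≠ ⊥ := conj_ne_bot f as'
  set rA := (conj f as').toReal with hrAdef
  have hrA : conj f as' = (rA : EReal) := (EReal.coe_toReal hAtop hAbot).symm
  have hBtop : conj g bs ≠ ⊤ := by
    intro htop
    have h2 := hsaddle₂ xs bg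
    rw [Fpd_real f g h μx μy xs ys as' bg rA (⟪bg, ys⟫ - g ys) hrA hBg] at h2
    rw [Fpd, htop, hrA, ← EReal.coe_sub, EReal.coe_add_top] at h2
    exact EReal.coe_ne_top _ (top_le_iff.mp h2)
  have hBbot : conj g bs ≠ ⊥ := conj_ne_bot g bs
  set rB := (conj g bs).toReal with hrBdef
  have hrB : conj g bs = (rB : EReal) := (EReal.coe_toReal hBtop hBbot).symm
  have key1 : ∀ y : Y,
      ⟪af, xs⟫ - ⟪bs, y⟫ + μx / 2 * ‖xs‖ ^ 2 - μy / 2 * ‖y‖ ^ 2 + h (xs, y)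
          - (⟪af, xs⟫ - f xs) + rB ≤
        ⟪as', xs⟫ - ⟪bs, ys⟫ + μx / 2 * ‖xs‖ ^ 2 - μy / 2 * ‖ys‖ ^ 2 + h (xs, ys)
          - rA + rB := by
    intro y
    have h1 := hsaddle₁ y af
    rw [Fpd_real f g h μx μy xs y af bs _ _ hAf hrB,
      Fpd_real f g h μx μy xs ys as' bs rA rB hrA hrB] at h1
    exact_mod_cast h1
  have key2 : ∀ x : X,
      ⟪as', xs⟫ - ⟪bs, ys⟫ + μx / 2 * ‖xs‖ ^ 2 - μy / 2 * ‖ys‖ ^ 2 + h (xs, ys)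
          - rA + rB ≤
        ⟪as', x⟫ - ⟪bg, ys⟫ + μx / 2 * ‖x‖ ^ 2 - μy / 2 * ‖ys‖ ^ 2 + h (x, ys)
          - rA + (⟪bg, ys⟫ - g ys) := by
    intro x
    have h2 := hsaddle₂ x bg
    rw [Fpd_real f g h μx μy xs ys as' bs rA rB hrA hrB,
      Fpd_real f g h μx μy x ys as' bg rA _ hrA hBg] at h2
    exact_mod_cast h2
  have fyf : ∀ x : X, ⟪as', x⟫ - f x ≤ rA := by
    intro x
    have := fy_lem f as' x
    rw [hrA] at this
    exact_mod_cast this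
  have fyg : ∀ y : Y, ⟪bs, y⟫ - g y ≤ rB := by
    intro y
    have := fy_lem g bs y
    rw [hrB] at this
    exact_mod_cast this
  constructor
  · intro y
    linarith [key1 y, fyg y, fyf xs, key2 xs]
  · intro x
    linarith [key1 ys, fyg ys, key2 x, fyf x]
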